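/- Let X be a separable Banach space, T a bounded linear operator on X, X₀ a dense subset of X, and S : X₀ → X₀ a mapping satisfying T(S(x)) = x for all x ∈ X₀. Let Λ be a relatively compact subset of (a_T(X₀,S), b_T(X₀,S)). Then there exists c > 1 such that for every x ∈ X₀: (i) the series ∑_{n≥0} (λT)^n(x) converges unconditionally, uniformly for λ ∈ Λ; (ii) the series ∑_{n≥0} (S/λ)^n(x) converges unconditionally, uniformly for λ ∈ Λ; (iii) the series ∑_{n≥(c−1)m} (λ/μ)^m (S/μ)^n(x) converges unconditionally, uniformly for m ∈ ℕ and λ, μ ∈ Λ; (iv) the series ∑_{(c−1)m/c ≤ n ≤ m} (λ/μ)^{m−n} (λT)^n(x) converges unconditionally, uniformly for m ∈ ℕ and λ, μ ∈ Λ. -/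

import Mathlib

open Filter Topology
open scoped ENNReal NNReal

/-- A family of series `∑_{n ∈ R i} f i n` in a normed space converges unconditionally,
uniformly for `i : ι`. -/
def UnifUncondConv {ι X : Type*} [SeminormedAddCommGroup X]
    (f : ι → ℕ → X) (R : ι → Set ℕ) : Prop :=
  ∀ ε : ℝ, 0 < ε → ∃ N : ℕ, ∀ i : ι, ∀ F : Finset ℕ,
    (∀ n ∈ F, N ≤ n ∧ n ∈ R i) → ‖∑ n ∈ F, f i n‖ < ε

/-- `a_T(X₀,S) = sup_{x ∈ X₀} limsup_n ‖Sⁿx‖^{1/n}`, computed in `ℝ≥0∞`. -/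
noncomputable def aT {X : Type*} [NormedAddCommGroup X] (X₀ : Set X) (S : X₀ → X₀) : ℝ≥0∞ :=
  ⨆ x : X₀, Filter.limsup
    (fun n : ℕ => (‖((S^[n] x : X₀) : X)‖₊ : ℝ≥0∞) ^ (1 / (n : ℝ))) Filter.atTop

/-- `b_T(X₀,S) = inf_{x ∈ X₀} (limsup_n ‖Tⁿx‖^{1/n})⁻¹`, computed in `ℝ≥0∞`. -/
noncomputable def bT {X : Type*} [NormedAddCommGroup X] [NormedSpace ℝ X]
    (T : X →L[ℝ] X) (X₀ : Set X) : ℝ≥0∞ :=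
  ⨅ x : X₀, (Filter.limsup
    (fun n : ℕ => (‖(T ^ n) (x : X)‖₊ : ℝ≥0∞) ^ (1 / (n : ℝ))) Filter.atTop)⁻¹

lemma van (w : ℝ) (h0 : 0 ≤ w) (h1 : w < 1) (ε : ℝ) (hε : 0 < ε) :
    ∃ N : ℕ, ∀ F : Finset ℕ, (∀ n ∈ F, N ≤ n) → ∑ n ∈ F, w ^ n < ε := by
  have hs : Summable (fun n : ℕ => w ^ n) := summable_geometric_of_lt_one h0 h1
  obtain ⟨s, hset⟩ := summable_iff_vanishing.mp hs (Metric.ball 0 ε) (Metric.ball_mem_nhds _ hε)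
  refine ⟨s.sup id + 1, fun F hF => ?_⟩
  have hdisj : Disjoint F s := by
    rw [Finset.disjoint_left]
    intro n hnF hns
    have h1 : s.sup id + 1 ≤ n := hF n hnF
    have h2 : n ≤ s.sup id := Finset.le_sup (f := id) hns
    omega
  have := hset F hdisj
  rw [Metric.mem_ball, Real.dist_eq, sub_zero] at this
  calc ∑ n ∈ F, w ^ n ≤ |∑ n ∈ F, w ^ n| := le_abs_self _
    _ < ε := this

theorem unif_of_bound {ι X : Type*} [SeminormedAddCommGroup X]
    (f : ι → ℕ → X) (R : ι → Set ℕ) (w : ℝ) (h0 : 0 ≤ w) (h1 : w < 1) (N₀ : ℕ)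
    (hb : ∀ i n, N₀ ≤ n → n ∈ R i → ‖f i n‖ ≤ w ^ n) : UnifUncondConv f R := by
  intro ε hε
  obtain ⟨N₁, hN₁⟩ := van w h0 h1 ε hε
  refine ⟨max N₀ N₁, fun i F hF => ?_⟩
  calc ‖∑ n ∈ F, f i n‖ ≤ ∑ n ∈ F, ‖f i n‖ := norm_sum_le _ _
    _ ≤ ∑ n ∈ F, w ^ n := Finset.sum_le_sum (fun n hn =>
        hb i n (le_trans (le_max_left _ _) (hF n hn).1) (hF n hn).2)
    _ < ε := hN₁ F (fun n hn => le_trans (le_max_right _ _) (hF n hn).1)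

lemma norm_le_of_limsup_lt {X : Type*} [NormedAddCommGroup X] (g : ℕ → X) (s : ℝ)
    (h : Filter.limsup (fun n : ℕ => (‖g n‖₊ : ℝ≥0∞) ^ (1 / (n : ℝ))) Filter.atTop
      < ENNReal.ofReal s) : ∀ᶠ n in atTop, ‖g n‖ ≤ s ^ n := by
  have hs : 0 < s := by
    by_contra hs
    push_neg at hs
    rw [ENNReal.ofReal_eq_zero.mpr hs] at h
    exact (not_lt_of_ge zero_le) h
  have hev := Filter.eventually_lt_of_limsup_lt h
  filter_upwards [hev, Filter.eventually_ge_atTop 1] with n hn hn1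
  have hn0 : (n : ℝ) ≠ 0 := by positivity
  have : ((‖g n‖₊ : ℝ≥0∞) ^ (1 / (n : ℝ))) ^ (n : ℝ) ≤ (ENNReal.ofReal s) ^ (n : ℝ) :=
    ENNReal.rpow_le_rpow hn.le (by positivity)
  rw [← ENNReal.rpow_mul, one_div, inv_mul_cancel₀ hn0, ENNReal.rpow_one,
    ENNReal.rpow_natCast, ← ENNReal.ofReal_pow hs.le] at this
  have := ENNReal.toReal_mono (by simp) this
  simpa [ENNReal.toReal_ofReal (by positivity : (0:ℝ) ≤ s ^ n)] using this


set_option maxHeartbeats 2000000 in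
/-- Lemma 2.12. Here, for `v = (λ, μ, m) : Λ × Λ × ℕ`, `(S/λ)^n` is `λ^{-n} S^n`. -/
theorem stmt5 {X : Type*} [NormedAddCommGroup X] [NormedSpace ℝ X]
    [CompleteSpace X] [TopologicalSpace.SeparableSpace X]
    (T : X →L[ℝ] X) (X₀ : Set X) (hX₀ : Dense X₀) (S : X₀ → X₀)
    (hTS : ∀ x : X₀, T ((S x : X₀) : X) = (x : X))
    (Λ : Set ℝ)
    (hcomp : IsCompact (closure Λ))
    (hsub : closure Λ ⊆
      {l : ℝ | aT X₀ S < ENNReal.ofReal l ∧ ENNReal.ofReal l < bT T X₀}) :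
    ∃ c : ℝ, 1 < c ∧ ∀ x : X₀,
      -- (i) ∑_{n≥0} (λT)^n(x), uniformly for λ ∈ Λ
      (UnifUncondConv
        (fun l : Λ => fun n : ℕ => ((l : ℝ) ^ n) • ((T ^ n) (x : X)))
        (fun _ => Set.univ)) ∧
      -- (ii) ∑_{n≥0} (S/λ)^n(x), uniformly for λ ∈ Λ
      (UnifUncondConv
        (fun l : Λ => fun n : ℕ => (((l : ℝ)⁻¹) ^ n) • (((S^[n] x : X₀)) : X))
        (fun _ => Set.univ)) ∧
      -- (iii) ∑_{n ≥ (c−1)m} (λ/μ)^m (S/μ)^n(x), uniformly for m ∈ ℕ, λ, μ ∈ Λ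
      (UnifUncondConv
        (fun v : Λ × Λ × ℕ => fun n : ℕ =>
          ((((v.1 : ℝ) / (v.2.1 : ℝ)) ^ v.2.2 * ((v.2.1 : ℝ)⁻¹) ^ n) •
            (((S^[n] x : X₀)) : X)))
        (fun v => {n : ℕ | (c - 1) * (v.2.2 : ℝ) ≤ (n : ℝ)})) ∧
      -- (iv) ∑_{(c−1)m/c ≤ n ≤ m} (λ/μ)^{m−n} (λT)^n(x), uniformly for m ∈ ℕ, λ, μ ∈ Λ
      (UnifUncondConv
        (fun v : Λ × Λ × ℕ => fun n : ℕ =>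
          ((((v.1 : ℝ) / (v.2.1 : ℝ)) ^ (v.2.2 - n) * (v.1 : ℝ) ^ n) •
            ((T ^ n) (x : X))))
        (fun v => {n : ℕ | (c - 1) / c * (v.2.2 : ℝ) ≤ (n : ℝ) ∧ n ≤ v.2.2})) := by
  by_cases hne : Λ.Nonempty
  · -- main case
    have hcl : (closure Λ).Nonempty := hne.closure
    set m := sInf (closure Λ) with hm_def
    set M := sSup (closure Λ) with hM_def
    have hmem_m : m ∈ closure Λ := hcomp.sInf_mem hcl
    have hmem_M : M ∈ closure Λ := hcomp.sSup_mem hcl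
    have hm := hsub hmem_m
    have hM := hsub hmem_M
    simp only [Set.mem_setOf_eq] at hm hM
    have hbddA : BddAbove (closure Λ) := hcomp.bddAbove
    have hbddB : BddBelow (closure Λ) := hcomp.bddBelow
    have hlam : ∀ l ∈ Λ, m ≤ l ∧ l ≤ M := fun l hl =>
      ⟨csInf_le hbddB (subset_closure hl), le_csSup hbddA (subset_closure hl)⟩
    have hm0 : 0 < m := by
      by_contra h
      push_neg at h
      rw [ENNReal.ofReal_eq_zero.mpr h] at hm
      exact (not_lt_of_ge zero_le) hm.1
    have hMm : m ≤ M := le_csSup hbddA hmem_m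
    have hM0 : 0 < M := lt_of_lt_of_le hm0 hMm
    -- choose s
    have haT_top : aT X₀ S ≠ ⊤ := ne_top_of_lt hm.1
    have hatr : (aT X₀ S).toReal < m := (ENNReal.lt_ofReal_iff_toReal_lt haT_top).mp hm.1
    have haT0 : 0 ≤ (aT X₀ S).toReal := ENNReal.toReal_nonneg
    set s := ((aT X₀ S).toReal + m) / 2 with hs_def
    have hs0 : 0 < s := by positivity
    have hsm : s < m := by rw [hs_def]; linarith
    have hsa : aT X₀ S < ENNReal.ofReal s :=
      (ENNReal.lt_ofReal_iff_toReal_lt haT_top).mpr (by rw [hs_def]; linarith)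
    -- choose b'
    have hb' : ∃ b' : ℝ, M < b' ∧ ENNReal.ofReal b' < bT T X₀ := by
      rcases eq_or_ne (bT T X₀) ⊤ with htop | hntop
      · exact ⟨M + 1, by linarith, by rw [htop]; exact ENNReal.ofReal_lt_top⟩
      · have h1 : M < (bT T X₀).toReal :=
          (ENNReal.ofReal_lt_iff_lt_toReal hM0.le hntop).mp hM.2
        refine ⟨(M + (bT T X₀).toReal) / 2, by linarith, ?_⟩
        rw [ENNReal.ofReal_lt_iff_lt_toReal (by linarith) hntop]
        linarith
    obtain ⟨b', hb'M, hb'bT⟩ := hb'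
    have hb'0 : 0 < b' := lt_trans hM0 hb'M
    set q := s / m with hq_def
    set ρ := M / b' with hρ_def
    have hq0 : 0 < q := by positivity
    have hq1 : q < 1 := (div_lt_one hm0).mpr hsm
    have hρ0 : 0 < ρ := by positivity
    have hρ1 : ρ < 1 := (div_lt_one hb'0).mpr hb'M
    set u := Real.sqrt q with hu_def
    set w := Real.sqrt ρ with hw_def
    have hu0 : 0 < u := Real.sqrt_pos.mpr hq0
    have huu : u * u = q := Real.mul_self_sqrt hq0.le
    have hu1 : u < 1 := by
      rw [hu_def, ← Real.sqrt_one]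
      exact Real.sqrt_lt_sqrt hq0.le hq1
    have hw0 : 0 < w := Real.sqrt_pos.mpr hρ0
    have hww : w * w = ρ := Real.mul_self_sqrt hρ0.le
    have hw1 : w < 1 := by
      rw [hw_def, ← Real.sqrt_one]
      exact Real.sqrt_lt_sqrt hρ0.le hρ1
    set K := M / m with hK_def
    have hK1 : 1 ≤ K := (one_le_div hm0).mpr hMm
    have hK0 : 0 < K := lt_of_lt_of_le one_pos hK1
    set θ0 := min (1 / u) (1 / w) with hθ0_def
    have hθ0_1 : 1 < θ0 := by
      apply lt_min
      · rw [lt_div_iff₀ hu0]; linarith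
      · rw [lt_div_iff₀ hw0]; linarith
    have hlogθ0 : 0 < Real.log θ0 := Real.log_pos hθ0_1
    have hlogK : 0 ≤ Real.log K := Real.log_nonneg hK1
    set c := 2 + Real.log K / Real.log θ0 with hc_def
    have hc1 : 1 < c := by
      have : 0 ≤ Real.log K / Real.log θ0 := by positivity
      rw [hc_def]; linarith
    have hc1' : 0 < c - 1 := by linarith
    set θ := K ^ (1 / (c - 1) : ℝ) with hθ_def
    have hθ1 : 1 ≤ θ := Real.one_le_rpow hK1 (by positivity)
    have hθθ0 : θ ≤ θ0 := by
      have hc1e : (c - 1) * Real.log θ0 = Real.log θ0 + Real.log K := by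
        rw [hc_def]; field_simp; ring
      have hkey : Real.log K * (1 / (c - 1)) ≤ Real.log θ0 := by
        rw [mul_one_div, div_le_iff₀ hc1']
        linarith [hc1e, hlogθ0]
      rw [hθ_def, Real.rpow_def_of_pos hK0, ← Real.exp_log (lt_trans one_pos hθ0_1),
        Real.exp_le_exp]
      exact hkey
    have hθu : θ ≤ 1 / u := le_trans hθθ0 (min_le_left _ _)
    have hθw : θ ≤ 1 / w := le_trans hθθ0 (min_le_right _ _)
    clear_value θ c θ0 K w u ρ q s M m
    refine ⟨c, hc1, fun x => ?_⟩
    -- per-x eventual bounds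
    have hSx : Filter.limsup
        (fun n : ℕ => (‖((S^[n] x : X₀) : X)‖₊ : ℝ≥0∞) ^ (1 / (n : ℝ))) Filter.atTop
        < ENNReal.ofReal s :=
      lt_of_le_of_lt (le_iSup (fun x : X₀ => Filter.limsup
        (fun n : ℕ => (‖((S^[n] x : X₀) : X)‖₊ : ℝ≥0∞) ^ (1 / (n : ℝ))) Filter.atTop) x) hsa
    obtain ⟨N₁, hN₁⟩ := eventually_atTop.mp
      (norm_le_of_limsup_lt (fun n => ((S^[n] x : X₀) : X)) s hSx)
    have hTx : Filter.limsup
        (fun n : ℕ => (‖(T ^ n) (x : X)‖₊ : ℝ≥0∞) ^ (1 / (n : ℝ))) Filter.atTop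
        < ENNReal.ofReal b'⁻¹ := by
      rw [ENNReal.ofReal_inv_of_pos hb'0]
      exact ENNReal.lt_inv_iff_lt_inv.mp (lt_of_lt_of_le hb'bT
        (iInf_le (fun x : X₀ => (Filter.limsup (fun n : ℕ =>
          (‖(T ^ n) (x : X)‖₊ : ℝ≥0∞) ^ (1 / (n : ℝ))) Filter.atTop)⁻¹) x))
    obtain ⟨N₂, hN₂⟩ := eventually_atTop.mp
      (norm_le_of_limsup_lt (fun n => (T ^ n) (x : X)) b'⁻¹ hTx)
    refine ⟨?_, ?_, ?_, ?_⟩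
    · -- (i)
      apply unif_of_bound _ _ ρ hρ0.le hρ1 N₂
      intro i n hn _
      obtain ⟨him, hiM⟩ := hlam i i.2
      have hi0 : (0:ℝ) < i := lt_of_lt_of_le hm0 him
      rw [norm_smul, Real.norm_eq_abs, abs_pow, abs_of_pos hi0]
      calc (i:ℝ) ^ n * ‖(T ^ n) (x:X)‖ ≤ M ^ n * (b'⁻¹) ^ n := by
            apply mul_le_mul (pow_le_pow_left₀ hi0.le hiM n) (hN₂ n hn) (norm_nonneg _)
              (by positivity)
        _ = ρ ^ n := by rw [← mul_pow, hρ_def, div_eq_mul_inv]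
    · -- (ii)
      apply unif_of_bound _ _ q hq0.le hq1 N₁
      intro i n hn _
      obtain ⟨him, _⟩ := hlam i i.2
      have hi0 : (0:ℝ) < i := lt_of_lt_of_le hm0 him
      rw [norm_smul, Real.norm_eq_abs, abs_pow, abs_of_pos (inv_pos.mpr hi0)]
      calc ((i:ℝ)⁻¹) ^ n * ‖((S^[n] x : X₀):X)‖ ≤ (m⁻¹) ^ n * s ^ n := by
            apply mul_le_mul (pow_le_pow_left₀ (by positivity)
              (inv_anti₀ hm0 him) n) (hN₁ n hn) (norm_nonneg _) (by positivity)
        _ = q ^ n := by rw [← mul_pow, hq_def, inv_mul_eq_div]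
    · -- (iii)
      apply unif_of_bound _ _ u hu0.le hu1 N₁
      rintro ⟨l, μ, mm⟩ n hn hR
      simp only [Set.mem_setOf_eq] at hR
      obtain ⟨hlm, hlM⟩ := hlam l l.2
      obtain ⟨hμm, hμM⟩ := hlam μ μ.2
      have hl0 : (0:ℝ) < l := lt_of_lt_of_le hm0 hlm
      have hμ0 : (0:ℝ) < μ := lt_of_lt_of_le hm0 hμm
      rw [norm_smul, Real.norm_eq_abs, abs_of_pos (by positivity)]
      have hA : ((l:ℝ)/(μ:ℝ)) ^ mm ≤ K ^ mm := by
        rw [hK_def]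
        exact pow_le_pow_left₀ (by positivity) (div_le_div₀ hM0.le hlM hm0 hμm) mm
      have hB : ((μ:ℝ)⁻¹) ^ n ≤ (m⁻¹) ^ n :=
        pow_le_pow_left₀ (by positivity) (inv_anti₀ hm0 hμm) n
      have hC : ‖((S^[n] x : X₀):X)‖ ≤ s ^ n := hN₁ n hn
      have hKn : K ^ mm ≤ (1/u) ^ n := by
        have hmn : (mm : ℝ) ≤ (n : ℝ) / (c - 1) := (le_div_iff₀ hc1').mpr (by linarith)
        calc K ^ mm = K ^ (mm : ℝ) := (Real.rpow_natCast K mm).symm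
          _ ≤ K ^ ((n : ℝ) / (c - 1)) := Real.rpow_le_rpow_of_exponent_le hK1 hmn
          _ = θ ^ (n : ℝ) := by
              rw [hθ_def, ← Real.rpow_mul hK0.le]
              congr 1
              ring
          _ = θ ^ n := Real.rpow_natCast θ n
          _ ≤ (1/u) ^ n := pow_le_pow_left₀ (by linarith) hθu n
      calc ((l:ℝ)/(μ:ℝ)) ^ mm * ((μ:ℝ)⁻¹) ^ n * ‖((S^[n] x : X₀):X)‖
          ≤ K ^ mm * (m⁻¹) ^ n * s ^ n := by
            apply mul_le_mul (mul_le_mul hA hB (by positivity) (by positivity)) hC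
              (norm_nonneg _) (by positivity)
        _ ≤ (1/u) ^ n * (m⁻¹) ^ n * s ^ n := by
            apply mul_le_mul_of_nonneg_right (mul_le_mul_of_nonneg_right hKn (by positivity))
              (by positivity)
        _ = ((1/u) * m⁻¹ * s) ^ n := by rw [mul_pow, mul_pow]
        _ = u ^ n := by
            congr 1
            have hs_eq : s = u * u * m := by rw [huu, hq_def]; field_simp
            rw [hs_eq]
            field_simp [hu0.ne', hm0.ne']
    · -- (iv)
      apply unif_of_bound _ _ w hw0.le hw1 N₂
      rintro ⟨l, μ, mm⟩ n hn hR
      simp only [Set.mem_setOf_eq] at hR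
      obtain ⟨hn1, hn2⟩ := hR
      obtain ⟨hlm, hlM⟩ := hlam l l.2
      obtain ⟨hμm, hμM⟩ := hlam μ μ.2
      have hl0 : (0:ℝ) < l := lt_of_lt_of_le hm0 hlm
      have hμ0 : (0:ℝ) < μ := lt_of_lt_of_le hm0 hμm
      rw [norm_smul, Real.norm_eq_abs, abs_of_pos (by positivity)]
      have hA : ((l:ℝ)/(μ:ℝ)) ^ (mm - n) ≤ K ^ (mm - n) := by
        rw [hK_def]
        exact pow_le_pow_left₀ (by positivity) (div_le_div₀ hM0.le hlM hm0 hμm) _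
      have hB : (l:ℝ) ^ n ≤ M ^ n := pow_le_pow_left₀ hl0.le hlM n
      have hC : ‖(T ^ n) (x:X)‖ ≤ (b'⁻¹) ^ n := hN₂ n hn
      have hc0 : (0:ℝ) < c := lt_trans one_pos hc1
      have hKn : K ^ (mm - n) ≤ (1/w) ^ n := by
        have hcast : ((mm - n : ℕ) : ℝ) = (mm : ℝ) - (n : ℝ) := by
          rw [Nat.cast_sub hn2]
        have hmn : ((mm - n : ℕ) : ℝ) ≤ (n : ℝ) / (c - 1) := by
          rw [hcast, le_div_iff₀ hc1']
          have hid : c * ((c - 1) / c * (mm : ℝ)) = (c - 1) * (mm : ℝ) := by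
            field_simp
          have h3 : (c - 1) * (mm : ℝ) ≤ c * (n : ℝ) := by
            have h4 := mul_le_mul_of_nonneg_left hn1 hc0.le
            linarith [hid, h4]
          linarith [h3]
        calc K ^ (mm - n) = K ^ ((mm - n : ℕ) : ℝ) := (Real.rpow_natCast K _).symm
          _ ≤ K ^ ((n : ℝ) / (c - 1)) := Real.rpow_le_rpow_of_exponent_le hK1 hmn
          _ = θ ^ (n : ℝ) := by
              rw [hθ_def, ← Real.rpow_mul hK0.le]
              congr 1
              ring
          _ = θ ^ n := Real.rpow_natCast θ n
          _ ≤ (1/w) ^ n := pow_le_pow_left₀ (by linarith) hθw n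
      calc ((l:ℝ)/(μ:ℝ)) ^ (mm - n) * (l:ℝ) ^ n * ‖(T ^ n) (x:X)‖
          ≤ K ^ (mm - n) * M ^ n * (b'⁻¹) ^ n := by
            apply mul_le_mul (mul_le_mul hA hB (by positivity) (by positivity)) hC
              (norm_nonneg _) (by positivity)
        _ ≤ (1/w) ^ n * M ^ n * (b'⁻¹) ^ n := by
            apply mul_le_mul_of_nonneg_right (mul_le_mul_of_nonneg_right hKn (by positivity))
              (by positivity)
        _ = ((1/w) * M * b'⁻¹) ^ n := by rw [mul_pow, mul_pow]
        _ = w ^ n := by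
            congr 1
            have hM_eq : M = w * w * b' := by rw [hww, hρ_def]; field_simp
            rw [hM_eq]
            field_simp [hw0.ne', hb'0.ne']
  · -- Λ empty
    rw [Set.not_nonempty_iff_eq_empty] at hne
    have hemp : IsEmpty ↥Λ := by rw [hne]; exact Set.isEmpty_coe_sort.mpr rfl
    refine ⟨2, one_lt_two, fun x => ?_⟩
    refine ⟨?_, ?_, ?_, ?_⟩ <;> intro ε hε <;> refine ⟨0, fun i => ?_⟩
    · exact (hemp.false i).elim
    · exact (hemp.false i).elim
    · exact (hemp.false i.1).elim
    · exact (hemp.false i.1).elim
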